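/- (Abstract plastic correction, forward direction.) Let ĝ : ℝ² → ℝ be continuously differentiable with ∂ĝ/∂ϱ(p,ϱ) ≥ 0 for all (p,ϱ), and write ĝ_V = ∂ĝ/∂p, ĝ_ϱ = ∂ĝ/∂ϱ. Let f̂ : ℝ³ × [0,∞) → ℝ, let ℓ̂ : ℝ³ × [0,∞) → (0,∞), let H : [0,∞) → [0,∞) be nondecreasing and continuous with H(0) = 0, and let r̃ : [−1,1] → ℝ be continuous. Assume the trial data satisfy ϱ^tr > 0. Suppose (σ, ε̄^p, Δλ) with Δλ > 0 satisfies: σ = σ^tr − Δλ·[K·ĝ_V(p(σ), ϱ(σ))·I + 2G·ĝ_ϱ(p(σ), ϱ(σ))·n̂] for some n̂ ∈ ∂ϱ(σ); ε̄^p = ε̄^{p,tr} + Δλ·ℓ̂(p(σ), ϱ(σ), ϱ̃(σ), H(ε̄^p)), where ϱ̃(σ) = ϱ(σ)·r̃(cos θ(σ)) for ϱ(σ) > 0 and ϱ̃(σ) = 0 otherwise; and f̂(p(σ), ϱ(σ), ϱ_e(σ), H(ε̄^p)) = 0. Then, writing p = p(σ) and ϱ = ϱ(σ), the quadruple (p,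 ϱ, ε̄^p, Δλ) satisfies: p = p^tr − Δλ·K·ĝ_V(p, ϱ); ϱ = max(0, ϱ^tr − Δλ·2G·ĝ_ϱ(p, ϱ)); ε̄^p = ε̄^{p,tr} + Δλ·ℓ̂(p, ϱ, ϱ·r̃(cos θ(σ^tr)), H(ε̄^p)); and f̂(p, ϱ, ϱ·r_e(cos θ(σ^tr)), H(ε̄^p)) = 0. -/

import Mathlib

open Matrix

noncomputable section

/-- The space of real 3×3 matrices (we restrict to symmetric ones via `Matrix.IsSymm`). -/
abbrev Mat3 := Matrix (Fin 3) (Fin 3) ℝ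

/-- Frobenius inner product (for symmetric matrices): ⟨A,B⟩ = tr(A·B). -/
def finner (A B : Mat3) : ℝ := (A * B).trace

/-- Norm induced by `finner` (Frobenius norm on symmetric matrices). -/
def fnorm (A : Mat3) : ℝ := Real.sqrt (finner A A)

/-- Hydrostatic pressure: p(σ) = tr(σ)/3. -/
def pvol (σ : Mat3) : ℝ := σ.trace / 3

/-- Deviatoric part: dev(σ) = σ − p(σ)·I. -/
def devm (σ : Mat3) : Mat3 := σ - pvol σ • (1 : Mat3)

/-- ϱ(σ) = ‖dev(σ)‖. -/
def rho (σ : Mat3) : ℝ := fnorm (devm σ)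

/-- The subdifferential ∂ϱ(σ): symmetric matrices n̂ with
ϱ(τ) ≥ ϱ(σ) + ⟨n̂, τ − σ⟩ for all symmetric τ. -/
def subgradRho (σ : Mat3) : Set Mat3 :=
  {n : Mat3 | n.IsSymm ∧ ∀ τ : Mat3, τ.IsSymm → rho σ + finner n (τ - σ) ≤ rho τ}

/-- Lode angle θ(σ) = (1/3)·arccos((3√3/2)·J₃/J₂^{3/2}), with J₂ = ϱ²/2 and
J₃ = tr(dev(σ)³)/3 (meaningful when ϱ(σ) > 0). -/
def lode (σ : Mat3) : ℝ :=
  (1/3) * Real.arccos ((3 * Real.sqrt 3 / 2) *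
    ((devm σ * devm σ * devm σ).trace / 3) / Real.rpow (rho σ ^ 2 / 2) (3/2))

/-- Willam–Warnke function r_e with eccentricity parameter e. -/
def rW (e x : ℝ) : ℝ :=
  (4 * (1 - e^2) * x^2 + (2*e - 1)^2) /
    (2 * (1 - e^2) * x + (2*e - 1) * Real.sqrt (4 * (1 - e^2) * x^2 + 5*e^2 - 4*e))

/-- ϱ_e(σ) = ϱ(σ)·r_e(cos θ(σ)) for ϱ(σ) > 0, and ϱ_e(σ) = 0 for ϱ(σ) = 0. -/
def rhoE (e : ℝ) (σ : Mat3) : ℝ :=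
  if rho σ = 0 then 0 else rho σ * rW e (Real.cos (lode σ))

/-- m_g'(p) = A_g·exp((p − f̄_t/3)/(B_g·f̄_c)). -/
def mgp (Ag Bg fc ft p : ℝ) : ℝ := Ag * Real.exp ((p - ft/3) / (Bg * fc))

/-- Jirásek–Grassl yield function f̂(p,ϱ,ϱ_e) = (3/2)(ϱ/f̄_c)² + m₀(ϱ_e/(√6 f̄_c) + p/f̄_c) − 1. -/
def fJG (m0 fc p ϱ ϱe : ℝ) : ℝ :=
  (3/2) * (ϱ/fc)^2 + m0 * (ϱe / (Real.sqrt 6 * fc) + p/fc) - 1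

/-- ϱ̃(σ) = ϱ(σ)·r̃(cos θ(σ)) for ϱ(σ) > 0, and 0 otherwise. -/
def rhoTilde (rt : ℝ → ℝ) (σ : Mat3) : ℝ :=
  if rho σ = 0 then 0 else rho σ * rt (Real.cos (lode σ))

section AuxLemmas

lemma finner_comm (A B : Mat3) : finner A B = finner B A := Matrix.trace_mul_comm A B

lemma finner_add_right (A B C : Mat3) : finner A (B + C) = finner A B + finner A C := by
  simp [finner, Matrix.mul_add]

lemma finner_sub_right (A B C : Mat3) : finner A (B - C) = finner A B - finner A C := by
  simp [finner, Matrix.mul_sub]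

lemma finner_smul_right (c : ℝ) (A B : Mat3) : finner A (c • B) = c * finner A B := by
  simp [finner, Matrix.mul_smul]

lemma finner_one (A : Mat3) : finner A 1 = A.trace := by simp [finner]

lemma finner_self_eq (A : Mat3) (hA : A.IsSymm) :
    finner A A = ∑ i, ∑ j, (A i j)^2 := by
  simp only [finner, Matrix.trace, Matrix.diag, Matrix.mul_apply]
  refine Finset.sum_congr rfl fun i _ => Finset.sum_congr rfl fun j _ => ?_
  rw [hA.apply, sq]

lemma finner_self_nonneg (A : Mat3) (hA : A.IsSymm) : 0 ≤ finner A A := by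
  rw [finner_self_eq A hA]
  exact Finset.sum_nonneg fun i _ => Finset.sum_nonneg fun j _ => sq_nonneg _

lemma finner_self_eq_zero (A : Mat3) (hA : A.IsSymm) (h : finner A A = 0) : A = 0 := by
  rw [finner_self_eq A hA] at h
  ext i j
  have h1 := (Finset.sum_eq_zero_iff_of_nonneg
    (fun i _ => Finset.sum_nonneg fun j _ => sq_nonneg (A i j))).mp h i (Finset.mem_univ i)
  have h2 := (Finset.sum_eq_zero_iff_of_nonneg (fun j _ => sq_nonneg (A i j))).mp h1 j
    (Finset.mem_univ j)
  simpa using pow_eq_zero_iff (n := 2) (by norm_num) |>.mp h2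

lemma fnorm_sq (A : Mat3) (hA : A.IsSymm) : fnorm A ^ 2 = finner A A :=
  Real.sq_sqrt (finner_self_nonneg A hA)

lemma fnorm_smul (c : ℝ) (A : Mat3) : fnorm (c • A) = |c| * fnorm A := by
  unfold fnorm
  rw [finner_smul_right, finner_comm, finner_smul_right, ← mul_assoc,
    show c * c = c ^ 2 from (sq c).symm, Real.sqrt_mul (sq_nonneg c), Real.sqrt_sq_eq_abs]

lemma devm_decomp (σ m : Mat3) (a b : ℝ) (hm : m.trace = 0) :
    devm (σ + a • (1:Mat3) + b • m) = devm σ + b • m := by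
  unfold devm pvol
  simp only [Matrix.trace_add, Matrix.trace_smul, Matrix.trace_one, hm, smul_eq_mul, mul_zero,
    Fintype.card_fin, Nat.cast_ofNat]
  module

lemma devm_add_smul_one (σ : Mat3) (t : ℝ) : devm (σ + t • (1:Mat3)) = devm σ := by
  unfold devm pvol
  simp only [Matrix.trace_add, Matrix.trace_smul, Matrix.trace_one, smul_eq_mul,
    Fintype.card_fin, Nat.cast_ofNat]
  module

lemma devm_add (A B : Mat3) : devm (A + B) = devm A + devm B := by
  unfold devm pvol
  simp only [Matrix.trace_add]
  module

lemma devm_of_trace_zero (m : Mat3) (hm : m.trace = 0) : devm m = m := by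
  unfold devm pvol
  rw [hm]
  simp

lemma finner_expand_sub (A B : Mat3) (c : ℝ) :
    finner (A - c • B) (A - c • B) = finner A A - 2 * c * finner A B + c^2 * finner B B := by
  simp only [finner, Matrix.sub_mul, Matrix.mul_sub, smul_mul_assoc, mul_smul_comm, Matrix.trace_smul,
    Matrix.trace_sub, Matrix.trace_smul, smul_smul, smul_eq_mul]
  rw [Matrix.trace_mul_comm B A]
  ring

lemma finner_expand_add (A B : Mat3) : 
    finner (A + B) (A + B) = finner A A + 2 * finner A B + finner B B := by
  simp only [finner, Matrix.add_mul, Matrix.mul_add, Matrix.trace_add]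
  rw [Matrix.trace_mul_comm B A]
  ring

lemma rho_nonneg (σ : Mat3) : 0 ≤ rho σ := Real.sqrt_nonneg _

lemma devm_isSymm (σ : Mat3) (h : σ.IsSymm) : (devm σ).IsSymm := by
  simp [devm, Matrix.IsSymm, Matrix.transpose_sub, Matrix.transpose_smul, h.eq]

lemma isSymm_smul (c : ℝ) (A : Mat3) (h : A.IsSymm) : (c • A).IsSymm := by
  simp [Matrix.IsSymm, Matrix.transpose_smul, h.eq]

lemma rho_zero : rho (0 : Mat3) = 0 := by
  simp [rho, devm, pvol, fnorm, finner]


lemma rpow_key (x : ℝ) (hx : 0 < x) :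
    Real.rpow (x ^ 2 / 2) (3/2) = x^3 / Real.rpow 2 (3/2) := by
  show (x ^ 2 / 2 : ℝ) ^ (3/2 : ℝ) = x ^ 3 / (2:ℝ) ^ (3/2 : ℝ)
  rw [Real.div_rpow (by positivity) (by norm_num)]
  congr 1
  rw [← Real.rpow_natCast x 2, ← Real.rpow_mul hx.le]
  norm_num

lemma lode_eq (σ σtr m : Mat3) (b : ℝ) (hb : 0 ≤ b)
    (hϱ : 0 < rho σ)
    (hD : devm σ = rho σ • m) (hdevtr : devm σtr = (rho σ + b) • m) :
    lode σ = lode σtr ∧ rho σtr = rho σ + b := by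
  have hfn : fnorm m = 1 := by
    have h1 : rho σ = rho σ * fnorm m := by
      conv_lhs => rw [rho, hD]
      rw [fnorm_smul, abs_of_nonneg hϱ.le]
    have := mul_left_cancel₀ (ne_of_gt hϱ) (by linarith [h1] : rho σ * 1 = rho σ * fnorm m)
    exact this.symm
  have hϱtr : rho σtr = rho σ + b := by
    conv_lhs => rw [rho, hdevtr]
    rw [fnorm_smul, abs_of_nonneg (by linarith), hfn, mul_one]
  refine ⟨?_, hϱtr⟩
  have hϱtrpos : (0:ℝ) < rho σ + b := by linarith
  have hT3 : ∀ (x : ℝ) (A : Mat3), ((x • A) * (x • A) * (x • A)).trace = x^3 * (A*A*A).trace := by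
    intro x A
    simp only [smul_mul_assoc, mul_smul_comm, Matrix.trace_smul, smul_smul, smul_eq_mul]
    ring
  unfold lode
  rw [hD, hdevtr, hT3, hT3, hϱtr, rpow_key _ hϱ, rpow_key _ hϱtrpos]
  have h2 : (0:ℝ) < Real.rpow 2 (3/2) := Real.rpow_pos_of_pos (by norm_num) _
  have harg : ∀ x : ℝ, 0 < x →
      3 * Real.sqrt 3 / 2 * (x ^ 3 * (m*m*m).trace / 3) / (x ^ 3 / Real.rpow 2 (3/2))
        = Real.sqrt 3 * (m*m*m).trace * Real.rpow 2 (3/2) / 2 := by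
    intro x hx
    have hx3 : x ^ 3 ≠ 0 := by positivity
    field_simp
  rw [harg _ hϱ, harg _ hϱtrpos]

end AuxLemmas

/-- abstract plastic correction, forward direction. -/
theorem abstract_plastic_corrector_forward
    (G K e : ℝ) (hG : 0 < G) (hK : 0 < K) (he : e ∈ Set.Icc (1/2 : ℝ) 1)
    (gh gV gϱ : ℝ → ℝ → ℝ)
    (hgC1 : ContDiff ℝ 1 (fun x : ℝ × ℝ => gh x.1 x.2))
    (hgV : ∀ p ϱ : ℝ, HasDerivAt (fun x => gh x ϱ) (gV p ϱ) p)
    (hgϱ : ∀ p ϱ : ℝ, HasDerivAt (fun x => gh p x) (gϱ p ϱ) ϱ)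
    (hgϱnn : ∀ p ϱ : ℝ, 0 ≤ gϱ p ϱ)
    (fh : ℝ → ℝ → ℝ → ℝ → ℝ)
    (ℓh : ℝ → ℝ → ℝ → ℝ → ℝ) (hℓ : ∀ a b c d : ℝ, 0 < ℓh a b c d)
    (H : ℝ → ℝ) (Hmono : MonotoneOn H (Set.Ici 0))
    (Hcont : ContinuousOn H (Set.Ici 0)) (H0 : H 0 = 0) (Hnn : ∀ x ≥ (0:ℝ), 0 ≤ H x)
    (rt : ℝ → ℝ) (hrt : Continuous rt)
    (σtr : Mat3) (hσtr : σtr.IsSymm) (εtr : ℝ) (hεtr : 0 ≤ εtr)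
    (hϱtr : 0 < rho σtr)
    (σ : Mat3) (hσ : σ.IsSymm) (εp Δl : ℝ) (hΔl : 0 < Δl)
    (n : Mat3) (hn : n ∈ subgradRho σ)
    (hσeq : σ = σtr - Δl • ((K * gV (pvol σ) (rho σ)) • (1 : Mat3) +
      (2 * G * gϱ (pvol σ) (rho σ)) • n))
    (hεeq : εp = εtr + Δl * ℓh (pvol σ) (rho σ) (rhoTilde rt σ) (H εp))
    (hf : fh (pvol σ) (rho σ) (rhoE e σ) (H εp) = 0) :
    pvol σ = pvol σtr - Δl * K * gV (pvol σ) (rho σ) ∧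
    rho σ = max 0 (rho σtr - Δl * (2 * G * gϱ (pvol σ) (rho σ))) ∧
    εp = εtr + Δl * ℓh (pvol σ) (rho σ) (rho σ * rt (Real.cos (lode σtr))) (H εp) ∧
    fh (pvol σ) (rho σ) (rho σ * rW e (Real.cos (lode σtr))) (H εp) = 0 := by
  obtain ⟨hnsymm, hsub⟩ := hn
  have hϱnn : 0 ≤ rho σ := rho_nonneg σ
  have hdσsymm := devm_isSymm σ hσ
  -- trace n = 0
  have htr : n.trace = 0 := by
    have key : ∀ t : ℝ, t * n.trace ≤ 0 := by
      intro t
      have h1 := hsub (σ + t • (1:Mat3)) (by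
        simp [Matrix.IsSymm, Matrix.transpose_add, Matrix.transpose_smul, hσ.eq])
      rw [add_sub_cancel_left, finner_smul_right, finner_one] at h1
      have h2 : rho (σ + t • (1:Mat3)) = rho σ := by
        rw [rho, devm_add_smul_one]; rfl
      rw [h2] at h1
      linarith
    have k1 := key 1
    have k2 := key (-1)
    linarith
  -- finner n σ = rho σ
  have hns : finner n σ = rho σ := by
    have h1 := hsub 0 (by simp [Matrix.IsSymm])
    rw [zero_sub, rho_zero] at h1
    have hneg : finner n (-σ) = - finner n σ := by
      simp [finner, Matrix.mul_neg]
    rw [hneg] at h1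
    have h2 := hsub (σ + σ) (hσ.add hσ)
    rw [add_sub_cancel_right] at h2
    have h3 : rho (σ + σ) = 2 * rho σ := by
      have : σ + σ = (2:ℝ) • σ := by module
      rw [rho, this, devm]
      have hp2 : pvol ((2:ℝ) • σ) = 2 * pvol σ := by
        simp [pvol, Matrix.trace_smul]; ring
      rw [hp2]
      have : (2:ℝ) • σ - (2 * pvol σ) • (1:Mat3) = (2:ℝ) • devm σ := by
        unfold devm; module
      rw [this, fnorm_smul]
      simp [rho]
    rw [h3] at h2
    linarith
  -- finner n (devm σ) = rho σ
  have hnd : finner n (devm σ) = rho σ := by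
    rw [devm, finner_sub_right, finner_smul_right, finner_one, htr, hns]
    ring
  -- finner n n ≤ 1
  have hNnn : 0 ≤ finner n n := finner_self_nonneg n hnsymm
  have hN : finner n n ≤ 1 := by
    have h1 := hsub (σ + n) (hσ.add hnsymm)
    rw [add_sub_cancel_left] at h1
    have hdev : devm (σ + n) = devm σ + n := by
      rw [devm_add, devm_of_trace_zero n htr]
    have hval : finner (devm σ + n) (devm σ + n) = rho σ ^ 2 + 2 * rho σ + finner n n := by
      rw [finner_expand_add, finner_comm (devm σ) n, hnd,
        ← fnorm_sq (devm σ) hdσsymm]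
      rfl
    have h2 : rho (σ + n) = Real.sqrt (rho σ ^ 2 + 2 * rho σ + finner n n) := by
      rw [rho, hdev, fnorm, hval]
    rw [h2] at h1
    have h3 : (rho σ + finner n n) ^ 2 ≤ rho σ ^ 2 + 2 * rho σ + finner n n := by
      have hnn1 : 0 ≤ rho σ + finner n n := by linarith
      have hnn2 : 0 ≤ rho σ ^ 2 + 2 * rho σ + finner n n := by positivity
      nlinarith [Real.sq_sqrt hnn2, Real.sqrt_nonneg (rho σ ^ 2 + 2 * rho σ + finner n n)]
    nlinarith
  -- decomposition of σtr
  have hbnn : 0 ≤ Δl * (2 * G * gϱ (pvol σ) (rho σ)) := by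
    have := hgϱnn (pvol σ) (rho σ); positivity
  have hσtr' : σtr = σ + (Δl * (K * gV (pvol σ) (rho σ))) • (1:Mat3)
      + (Δl * (2 * G * gϱ (pvol σ) (rho σ))) • n := by
    have h1 := eq_sub_iff_add_eq.mp hσeq
    rw [← h1]; module
  have hdevtr : devm σtr = devm σ + (Δl * (2 * G * gϱ (pvol σ) (rho σ))) • n := by
    rw [hσtr']; exact devm_decomp σ n _ _ htr
  have hpvol : pvol σ = pvol σtr - Δl * K * gV (pvol σ) (rho σ) := by
    rw [hσtr']
    unfold pvol
    simp only [Matrix.trace_add, Matrix.trace_smul, Matrix.trace_one, htr, smul_eq_mul,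
      Fintype.card_fin, Nat.cast_ofNat, mul_zero]
    ring
  refine ⟨hpvol, ?_⟩
  rcases hϱnn.lt_or_eq with hpos | hzero
  · -- rho σ > 0
    have hD : devm σ = rho σ • n := by
      have hDs : (devm σ - rho σ • n).IsSymm := by
        simp [Matrix.IsSymm, Matrix.transpose_sub, Matrix.transpose_smul, hdσsymm.eq, hnsymm.eq]
      have hval : finner (devm σ - rho σ • n) (devm σ - rho σ • n)
          = rho σ ^ 2 * (finner n n - 1) := by
        rw [finner_expand_sub, finner_comm (devm σ) n, hnd, ← fnorm_sq (devm σ) hdσsymm]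
        show rho σ ^ 2 - 2 * rho σ * rho σ + rho σ ^ 2 * finner n n = _
        ring
      have hle : finner (devm σ - rho σ • n) (devm σ - rho σ • n) ≤ 0 := by
        rw [hval]; nlinarith
      have hge := finner_self_nonneg _ hDs
      have := finner_self_eq_zero _ hDs (le_antisymm hle hge)
      rwa [sub_eq_zero] at this
    have hdevtr2 : devm σtr = (rho σ + Δl * (2 * G * gϱ (pvol σ) (rho σ))) • n := by
      rw [hdevtr, hD]; module
    obtain ⟨hlode, hϱtreq⟩ := lode_eq σ σtr n _ hbnn hpos hD hdevtr2
    have hϱeq : rho σ = max 0 (rho σtr - Δl * (2 * G * gϱ (pvol σ) (rho σ))) := by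
      rw [hϱtreq]
      rw [add_sub_cancel_right]
      exact (max_eq_right hpos.le).symm
    have h3 : rhoTilde rt σ = rho σ * rt (Real.cos (lode σtr)) := by
      rw [rhoTilde, if_neg (ne_of_gt hpos), hlode]
    have h4 : rhoE e σ = rho σ * rW e (Real.cos (lode σtr)) := by
      rw [rhoE, if_neg (ne_of_gt hpos), hlode]
    exact ⟨hϱeq, by rw [← h3]; exact hεeq, by rw [← h4]; exact hf⟩
  · -- rho σ = 0
    have hϱ0 : rho σ = 0 := hzero.symm
    have hdev0 : devm σ = 0 := by
      apply finner_self_eq_zero _ hdσsymm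
      have h1 : Real.sqrt (finner (devm σ) (devm σ)) = 0 := hϱ0
      have h2 := finner_self_nonneg _ hdσsymm
      nlinarith [Real.sq_sqrt h2, h1]
    have hdevtr2 : devm σtr = (Δl * (2 * G * gϱ (pvol σ) (rho σ))) • n := by
      rw [hdevtr, hdev0, zero_add]
    have hfn1 : fnorm n ≤ 1 := by
      rw [fnorm]
      calc Real.sqrt (finner n n) ≤ Real.sqrt 1 := Real.sqrt_le_sqrt hN
      _ = 1 := Real.sqrt_one
    have hϱtrle : rho σtr ≤ Δl * (2 * G * gϱ (pvol σ) (rho σ)) := by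
      conv_lhs => rw [rho, hdevtr2]
      rw [fnorm_smul, abs_of_nonneg hbnn]
      calc Δl * (2 * G * gϱ (pvol σ) (rho σ)) * fnorm n
          ≤ Δl * (2 * G * gϱ (pvol σ) (rho σ)) * 1 := by
            exact mul_le_mul_of_nonneg_left hfn1 hbnn
      _ = _ := mul_one _
    have hϱeq : rho σ = max 0 (rho σtr - Δl * (2 * G * gϱ (pvol σ) (rho σ))) := by
      rw [max_eq_left (by linarith : rho σtr - Δl * (2 * G * gϱ (pvol σ) (rho σ)) ≤ 0)]
      exact hϱ0
    have h3 : rhoTilde rt σ = rho σ * rt (Real.cos (lode σtr)) := by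
      rw [rhoTilde, if_pos hϱ0, hϱ0, zero_mul]
    have h4 : rhoE e σ = rho σ * rW e (Real.cos (lode σtr)) := by
      rw [rhoE, if_pos hϱ0, hϱ0, zero_mul]
    exact ⟨hϱeq, by rw [← h3]; exact hεeq, by rw [← h4]; exact hf⟩
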